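/- Let u_β be the fixed point of the substitution φ(i) = 0^{t_{i+1}}(i+1) (0 ≤ i ≤ m−2), φ(m−1) = 0^{t_m}, with t_1 ≥ t_i for all i and t_m ≥ 1. If t_m ≥ 2, then the word 0^{t_1 + t_m − 1} is a left special factor of u_β that is not a prefix of u_β. -/

import Mathlib

/-- The factor of the infinite word `u` starting at position `i`, of length `n`. -/
def factorAt {A : Type*} (u : ℕ → A) (i n : ℕ) : List A :=
  (List.range n).map fun j => u (i + j)

/-- `w` is a factor of the infinite word `u`. -/
def IsFactor {A : Type*} (u : ℕ → A) (w : List A) : Prop :=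
  ∃ i, w = factorAt u i w.length

/-- `u` is a fixed point of the substitution `φ`. -/
def SubFixed {A : Type*} (u : ℕ → A) (φ : A → List A) : Prop :=
  ∀ n : ℕ, factorAt u 0 ((factorAt u 0 n).flatMap φ).length = (factorAt u 0 n).flatMap φ

section Aux


variable {A : Type*} {u : ℕ → A} {φ : A → List A}

theorem factorAt_length (u : ℕ → A) (i n : ℕ) : (factorAt u i n).length = n := by
  simp [factorAt]

theorem factorAt_append (u : ℕ → A) (i a b : ℕ) :
    factorAt u i (a + b) = factorAt u i a ++ factorAt u (i + a) b := by
  simp only [factorAt, List.range_add, List.map_append, List.map_map]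
  congr 1
  apply List.map_congr_left
  intro j _
  simp only [Function.comp_apply]
  congr 1
  omega

theorem factorAt_one (u : ℕ → A) (i : ℕ) : factorAt u i 1 = [u i] := by
  simp [factorAt, List.range_succ]

theorem u_of_factorAt {i n : ℕ} {l : List A} (h : factorAt u i n = l) {j : ℕ} (hj : j < n) :
    ∃ hjl : j < l.length, u (i + j) = l[j] := by
  subst h
  refine ⟨by simpa [factorAt_length] using hj, ?_⟩
  simp [factorAt]

theorem isFactor_factorAt (u : ℕ → A) (i n : ℕ) : IsFactor u (factorAt u i n) :=
  ⟨i, by rw [factorAt_length]⟩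

theorem IsFactor.infix {w v : List A} (hw : IsFactor u w) (hv : v <:+: w) : IsFactor u v := by
  obtain ⟨i, hi⟩ := hw
  obtain ⟨s, tt, hst⟩ := hv
  have hlen : w.length = s.length + (v.length + tt.length) := by
    rw [← hst]; simp
  rw [hlen, factorAt_append, factorAt_append] at hi
  rw [← hst, List.append_assoc] at hi
  obtain ⟨-, hi2⟩ := List.append_inj hi (by rw [factorAt_length])
  obtain ⟨hv2, -⟩ := List.append_inj hi2 (by rw [factorAt_length])
  exact ⟨i + s.length, by rw [← hv2]⟩

theorem isFactor_flatMap (hu : SubFixed u φ) {w : List A} (hw : IsFactor u w) :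
    IsFactor u (w.flatMap φ) := by
  obtain ⟨i, hi⟩ := hw
  have hpre : factorAt u 0 (i + w.length) = factorAt u 0 i ++ w := by
    rw [factorAt_append, Nat.zero_add, ← hi]
  have h2 := hu (i + w.length)
  rw [hpre, List.flatMap_append] at h2
  exact (isFactor_factorAt u 0 _).infix
    ⟨(factorAt u 0 i).flatMap φ, [], by rw [List.append_nil]; exact h2.symm⟩

theorem flatMap_replicate_eq {a z : A} {c : ℕ} (h : φ a = List.replicate c z) :
    ∀ k, (List.replicate k a).flatMap φ = List.replicate (k * c) z := by
  intro k
  induction k with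
  | zero => simp
  | succ n ih =>
      rw [List.replicate_succ, List.flatMap_cons, h, ih, ← List.replicate_add]
      congr 1
      ring

theorem replicate_split {a b : ℕ} (x : A) (h : a ≤ b) :
    List.replicate b x = List.replicate a x ++ List.replicate (b - a) x := by
  rw [← List.replicate_add]
  congr 1
  omega

end Aux

set_option maxHeartbeats 1000000 in
/-- If `t_m ≥ 2`, the word `0^{t_1+t_m−1}` is a left special factor of `u_β`
that is not a prefix of `u_β`. -/
theorem stmt_10 (m : ℕ) (hm : 2 ≤ m) (t : ℕ → ℕ)
    (hdom : ∀ i : ℕ, 2 ≤ i → i ≤ m → t i ≤ t 1) (ht1 : 1 ≤ t 1) (htm : 2 ≤ t m)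
    (φ : Fin m → List (Fin m))
    (hφ : ∀ i : Fin m, φ i =
      if h : (i : ℕ) + 1 < m then
        List.replicate (t ((i : ℕ) + 1)) (⟨0, by omega⟩ : Fin m) ++ [(⟨(i : ℕ) + 1, h⟩ : Fin m)]
      else
        List.replicate (t m) (⟨0, by omega⟩ : Fin m))
    (u : ℕ → Fin m) (hu : SubFixed u φ) :
    (∃ a b : Fin m, a ≠ b ∧
        IsFactor u (a :: List.replicate (t 1 + t m - 1) (⟨0, by omega⟩ : Fin m)) ∧
        IsFactor u (b :: List.replicate (t 1 + t m - 1) (⟨0, by omega⟩ : Fin m))) ∧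
    List.replicate (t 1 + t m - 1) (⟨0, by omega⟩ : Fin m) ≠ factorAt u 0 (t 1 + t m - 1) := by
  classical
  have hm1 : m - 1 < m := by omega
  set z : Fin m := ⟨0, by omega⟩ with hzdef
  set one : Fin m := ⟨1, by omega⟩ with honedef
  set lst : Fin m := ⟨m - 1, hm1⟩ with hlstdef
  -- φ values
  have hφmid : ∀ (j : ℕ) (hj : j + 1 < m),
      φ ⟨j, by omega⟩ = List.replicate (t (j + 1)) z ++ [⟨j + 1, hj⟩] := by
    intro j hj
    have h := hφ ⟨j, by omega⟩
    simp only [] at h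
    rw [dif_pos hj] at h
    exact h
  have hφz : φ z = List.replicate (t 1) z ++ [one] := by
    have h := hφmid 0 (by omega)
    simpa using h
  have hφlast : φ lst = List.replicate (t m) z := by
    have h := hφ lst
    rw [dif_neg (by simp [hlstdef]; omega)] at h
    exact h
  -- u 0 = z
  have h0 := hu 1
  rw [factorAt_one] at h0
  simp only [List.flatMap_cons, List.flatMap_nil, List.append_nil] at h0
  have hu0 : u 0 = z := by
    have he := hφ (u 0)
    by_cases hc : (u 0 : ℕ) + 1 < m
    · rw [dif_pos hc] at he
      rw [he] at h0
      by_cases ht0 : t ((u 0 : ℕ) + 1) = 0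
      · exfalso
        rw [ht0] at h0
        simp only [List.replicate_zero, List.nil_append] at h0
        obtain ⟨hl, hv⟩ := u_of_factorAt h0 (show 0 < [(⟨(u 0 : ℕ) + 1, hc⟩ : Fin m)].length by simp)
        simp only [Nat.add_zero, List.getElem_cons_zero] at hv
        have := congrArg Fin.val hv
        simp at this
      · obtain ⟨hl, hv⟩ := u_of_factorAt h0
          (show 0 < (List.replicate (t ((u 0 : ℕ) + 1)) z ++ [(⟨(u 0 : ℕ) + 1, hc⟩ : Fin m)]).length by
            simp)
        rw [List.getElem_append_left (by simp; omega), List.getElem_replicate] at hv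
        simpa using hv
    · rw [dif_neg hc] at he
      rw [he] at h0
      obtain ⟨hl, hv⟩ := u_of_factorAt h0 (show 0 < (List.replicate (t m) z).length by simp; omega)
      rw [List.getElem_replicate] at hv
      simpa using hv
  -- prefix 0^{t1} 1 ; in particular u (t 1) = one
  rw [hu0, hφz] at h0
  have hlen1 : (List.replicate (t 1) z ++ [one]).length = t 1 + 1 := by simp
  rw [hlen1] at h0
  have hut1 : u (t 1) = one := by
    obtain ⟨hl, hv⟩ := u_of_factorAt h0 (show t 1 < t 1 + 1 by omega)
    rw [List.getElem_concat_length (l := List.replicate (t 1) z) (i := t 1) (by simp)] at hv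
    simpa using hv
  -- every letter [k] is a factor
  have hfac0 : IsFactor u [z] := ⟨0, by rw [List.length_singleton, factorAt_one, hu0]⟩
  have hstep : ∀ k, ∀ hk : k < m, IsFactor u [(⟨k, hk⟩ : Fin m)] := by
    intro k
    induction k with
    | zero => intro hk; exact hfac0
    | succ n ih =>
      intro hk
      have hn : n < m := by omega
      have h1 : IsFactor u (([(⟨n, hn⟩ : Fin m)]).flatMap φ) := isFactor_flatMap hu (ih hn)
      simp only [List.flatMap_cons, List.flatMap_nil, List.append_nil] at h1
      rw [hφmid n (by omega)] at h1
      exact h1.infix ⟨List.replicate (t (n + 1)) z, [], by simp⟩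
  -- [z, z] is a factor
  have hlstfac : IsFactor u [lst] := hstep (m - 1) hm1
  have h2 : IsFactor u (φ lst) := by
    have := isFactor_flatMap hu hlstfac
    simpa using this
  rw [hφlast] at h2
  have hfac00 : IsFactor u [z, z] := by
    refine h2.infix ⟨[], List.replicate (t m - 2) z, ?_⟩
    rw [replicate_split z htm]
    simp [List.replicate_succ]
  -- [one, z] is a factor
  have h3 : IsFactor u ([z, z].flatMap φ) := isFactor_flatMap hu hfac00
  have he10 : [z, z].flatMap φ =
      List.replicate (t 1) z ++ ([one, z] ++ (List.replicate (t 1 - 1) z ++ [one])) := by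
    simp only [List.flatMap_cons, List.flatMap_nil, List.append_nil, hφz]
    rw [replicate_split z ht1]
    simp [List.replicate_succ, List.append_assoc]
  have hfac10 : IsFactor u [one, z] := by
    refine h3.infix ⟨List.replicate (t 1) z, List.replicate (t 1 - 1) z ++ [one], ?_⟩
    rw [he10, List.append_assoc]
  -- iterate machinery
  set Φ : List (Fin m) → List (Fin m) := fun l => l.flatMap φ with hΦdef
  have hΦfac : ∀ (n : ℕ) {w : List (Fin m)}, IsFactor u w → IsFactor u (Φ^[n] w) := by
    intro n
    induction n with
    | zero => intro w h; simpa using h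
    | succ n ih =>
      intro w h
      rw [Function.iterate_succ_apply']
      exact isFactor_flatMap hu (ih h)
  have hΦapp : ∀ (n : ℕ) (a b : List (Fin m)), Φ^[n] (a ++ b) = Φ^[n] a ++ Φ^[n] b := by
    intro n
    induction n with
    | zero => intro a b; simp
    | succ n ih =>
      intro a b
      rw [Function.iterate_succ_apply, Function.iterate_succ_apply, Function.iterate_succ_apply]
      have : Φ (a ++ b) = Φ a ++ Φ b := List.flatMap_append
      rw [this, ih]
  have hend : ∀ (n j : ℕ) (hj : j + n < m),
      ∃ (s : List (Fin m)) (x : Fin m), Φ^[n] [(⟨j, by omega⟩ : Fin m)] = s ++ [x] ∧ (x : ℕ) = j + n := by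
    intro n
    induction n with
    | zero =>
      intro j hj
      exact ⟨[], ⟨j, by omega⟩, by simp, by simp⟩
    | succ n ih =>
      intro j hj
      have hj1 : j + 1 < m := by omega
      have hstep1 : Φ [(⟨j, by omega⟩ : Fin m)] =
          List.replicate (t (j + 1)) z ++ [(⟨j + 1, hj1⟩ : Fin m)] := by
        show [(⟨j, by omega⟩ : Fin m)].flatMap φ = _
        simp only [List.flatMap_cons, List.flatMap_nil, List.append_nil]
        exact hφmid j hj1
      obtain ⟨s, x, hs, hx⟩ := ih (j + 1) (by omega)
      refine ⟨Φ^[n] (List.replicate (t (j + 1)) z) ++ s, x, ?_, by omega⟩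
      rw [Function.iterate_succ_apply, hstep1, hΦapp, hs, List.append_assoc]
  have hstart : ∀ n : ℕ, ∃ s : List (Fin m), Φ^[n] [z] = z :: s := by
    intro n
    induction n with
    | zero => exact ⟨[], rfl⟩
    | succ n ih =>
      obtain ⟨s, hs⟩ := ih
      refine ⟨List.replicate (t 1 - 1) z ++ [one] ++ s.flatMap φ, ?_⟩
      rw [Function.iterate_succ_apply', hs]
      show (z :: s).flatMap φ = _
      rw [List.flatMap_cons, hφz, replicate_split z ht1]
      simp [List.replicate_succ, List.append_assoc]
  -- [lst, z] is a factor
  obtain ⟨s1, x1, hs1, hx1⟩ := hend (m - 2) 1 (by omega)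
  obtain ⟨s2, hs2⟩ := hstart (m - 2)
  have hx1lst : x1 = lst := by
    apply Fin.ext
    rw [hx1]
    show 1 + (m - 2) = m - 1
    omega
  have hWfac : IsFactor u (Φ^[m - 2] ([one] ++ [z])) := hΦfac _ hfac10
  rw [hΦapp, hs1, hs2, hx1lst] at hWfac
  have hfacM0 : IsFactor u [lst, z] := by
    refine hWfac.infix ⟨s1, s2, ?_⟩
    simp [List.append_assoc]
  -- occurrence of [lst, z] and maximal run of lst's before it
  obtain ⟨p, hp⟩ := hfacM0
  have hp' := hp.symm
  obtain ⟨hl0, hp0⟩ := u_of_factorAt hp' (show 0 < [lst, z].length by simp)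
  obtain ⟨hl1, hp1⟩ := u_of_factorAt hp' (show 1 < [lst, z].length by simp)
  simp only [Nat.add_zero, List.getElem_cons_zero, List.getElem_cons_succ] at hp0 hp1
  have hzlst : z ≠ lst := by
    apply Fin.ne_of_val_ne
    show 0 ≠ m - 1
    omega
  have hP0 : u 0 ≠ lst := by rw [hu0]; exact hzlst
  obtain ⟨q, hqspec, hqle, hmid⟩ :
      ∃ q, u q ≠ lst ∧ q ≤ p ∧ ∀ r, q < r → r ≤ p → u r = lst := by
    refine ⟨Nat.findGreatest (fun r => u r ≠ lst) p,
      Nat.findGreatest_spec (P := fun r => u r ≠ lst) (Nat.zero_le p) hP0,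
      Nat.findGreatest_le p, ?_⟩
    intro r h1 h2
    by_contra hne
    exact Nat.findGreatest_is_greatest h1 h2 hne
  have hqlt : q < p := by
    rcases Nat.lt_or_ge q p with h | h
    · exact h
    · exfalso; exact hqspec (by rw [show q = p by omega, hp0])
  obtain ⟨k, hkdef⟩ : ∃ k, k = p - q := ⟨p - q, rfl⟩
  have hk1 : 1 ≤ k := by omega
  have hkq : q + k = p := by omega
  have hmidrep : factorAt u (q + 1) k = List.replicate k lst := by
    rw [List.eq_replicate_iff]
    refine ⟨factorAt_length u _ _, ?_⟩
    intro b hb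
    simp only [factorAt, List.mem_map, List.mem_range] at hb
    obtain ⟨j, hj, hbj⟩ := hb
    rw [← hbj]
    exact hmid (q + 1 + j) (by omega) (by omega)
  have hGsplit : factorAt u q (1 + k + 1) = [u q] ++ List.replicate k lst ++ [z] := by
    rw [factorAt_append, factorAt_append, factorAt_one, factorAt_one, hmidrep]
    rw [show q + (1 + k) = p + 1 by omega, hp1]
  have hGfac : IsFactor u ([u q] ++ List.replicate k lst ++ [z]) :=
    hGsplit ▸ isFactor_factorAt u q (1 + k + 1)
  -- letter x = u q, its successor a
  have hxne : (u q : ℕ) ≠ m - 1 := by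
    intro h
    exact hqspec (Fin.ext h)
  have hxlt : (u q : ℕ) + 1 < m := by
    have := (u q).isLt
    omega
  set a : Fin m := ⟨(u q : ℕ) + 1, hxlt⟩ with hadef
  have hφx : φ (u q) = List.replicate (t ((u q : ℕ) + 1)) z ++ [a] := by
    have h := hφ (u q)
    rw [dif_pos hxlt] at h
    exact h
  -- apply φ to G
  have hflatG : IsFactor u (([u q] ++ List.replicate k lst ++ [z]).flatMap φ) :=
    isFactor_flatMap hu hGfac
  have hrepflat : (List.replicate k lst).flatMap φ = List.replicate (k * t m) z :=
    flatMap_replicate_eq hφlast k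
  have hflatEq : ([u q] ++ List.replicate k lst ++ [z]).flatMap φ =
      List.replicate (t ((u q : ℕ) + 1)) z ++ [a] ++
        (List.replicate (k * t m) z ++ (List.replicate (t 1) z ++ [one])) := by
    simp only [List.flatMap_append, List.flatMap_cons, List.flatMap_nil, List.append_nil,
      hφx, hφz, hrepflat, List.append_assoc]
  obtain ⟨N, hNdef⟩ : ∃ N, N = t 1 + t m - 1 := ⟨_, rfl⟩
  have hKge : t m ≤ k * t m := by
    have h := Nat.mul_le_mul_right (t m) hk1
    simpa using h
  obtain ⟨R, hRdef⟩ : ∃ R, R = k * t m + t 1 - N := ⟨_, rfl⟩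
  have hR1 : 1 ≤ R := by omega
  have harith : k * t m + t 1 = N + R := by omega
  have hmerge : List.replicate (k * t m) z ++ (List.replicate (t 1) z ++ [one]) =
      List.replicate N z ++ (List.replicate R z ++ [one]) := by
    rw [← List.append_assoc, ← List.append_assoc, ← List.replicate_add, ← List.replicate_add,
      harith]
  have hfacA : IsFactor u (a :: List.replicate N z) := by
    refine hflatG.infix ⟨List.replicate (t ((u q : ℕ) + 1)) z, List.replicate R z ++ [one], ?_⟩
    rw [hflatEq, hmerge]
    simp [List.append_assoc]
  have hshift : ∀ (n : ℕ) (X : List (Fin m)),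
      z :: (List.replicate n z ++ X) = List.replicate n z ++ z :: X := by
    intro n X
    induction n with
    | zero => simp
    | succ n ih =>
      rw [List.replicate_succ, List.cons_append, List.cons_append, ← ih]
  have hfacB : IsFactor u (z :: List.replicate N z) := by
    refine hflatG.infix
      ⟨List.replicate (t ((u q : ℕ) + 1)) z ++ [a], List.replicate (R - 1) z ++ [one], ?_⟩
    rw [hflatEq, hmerge, replicate_split z hR1]
    simp only [List.replicate_succ, List.replicate_zero, List.append_assoc, List.cons_append,
      List.nil_append, List.singleton_append]
    rw [hshift]
  have hanez : a ≠ z := by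
    apply Fin.ne_of_val_ne
    show (u q : ℕ) + 1 ≠ 0
    omega
  subst hNdef
  refine ⟨⟨a, z, hanez, hfacA, hfacB⟩, ?_⟩
  intro hcon
  obtain ⟨hl2, hv2⟩ := u_of_factorAt hcon.symm (show t 1 < t 1 + t m - 1 by omega)
  rw [List.getElem_replicate] at hv2
  rw [Nat.zero_add, hut1] at hv2
  exact Fin.ne_of_val_ne (show (1 : ℕ) ≠ 0 by omega) hv2
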